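/- arXiv:2208.10021 — 2 statements merged into one kernel-verified Lean document; each statement's English description precedes it below -/
import Mathlib

section
/- Let n ≥ 1 and 1 ≤ q ≤ n be integers, let p, δ, ε, C be positive reals, and let m ≥ 0 be a real number. Suppose a_1, …, a_n are real numbers with 0 < a_1 ≤ ⋯ ≤ a_n and a_1 ⋯ a_n ≥ C ε^m, and suppose â_1, …, â_n are real numbers satisfying â_j ≥ (δ/p) a_j + ε/p for every j. Then the quantity γ := qε / (p(â_1 + ⋯ + â_q)) is well defined (the denominator is positive) and satisfies γ ≤ min(1, qε/(δ a_q)) ≤ min(1, q C^{-1/q} δ^{-1} ε^{1 - m/q} (a_{q+1} ⋯ a_n)^{1/q}). -/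
open Finset Real

/-- the key numerical estimate in the proof of the Nadel-type vanishing
theorem. With `0 < a 1 ≤ ⋯ ≤ a n`, `a 1 ⋯ a n ≥ C * ε ^ m`, and
`â j ≥ (δ/p) * a j + ε/p` for all `j`, the quantity
`γ := q * ε / (p * (â 1 + ⋯ + â q))` has positive denominator and satisfies
`γ ≤ min 1 (q*ε/(δ * a q)) ≤ min 1 (q * C^(-1/q) * δ⁻¹ * ε^(1 - m/q) * (a (q+1) ⋯ a n)^(1/q))`. -/
theorem stmt1 (n q : ℕ) (hn : 1 ≤ n) (hq1 : 1 ≤ q) (hqn : q ≤ n)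
    (p δ ε C m : ℝ) (hp : 0 < p) (hδ : 0 < δ) (hε : 0 < ε) (hC : 0 < C) (hm : 0 ≤ m)
    (a : ℕ → ℝ) (ahat : ℕ → ℝ)
    (ha1 : 0 < a 1)
    (hmono : ∀ i j, 1 ≤ i → i ≤ j → j ≤ n → a i ≤ a j)
    (hprod : C * ε ^ m ≤ ∏ i ∈ Finset.Icc 1 n, a i)
    (hhat : ∀ j, 1 ≤ j → j ≤ n → (δ / p) * a j + ε / p ≤ ahat j) :
    0 < p * (∑ j ∈ Finset.Icc 1 q, ahat j) ∧
    (q : ℝ) * ε / (p * (∑ j ∈ Finset.Icc 1 q, ahat j)) ≤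
      min 1 ((q : ℝ) * ε / (δ * a q)) ∧
    min 1 ((q : ℝ) * ε / (δ * a q)) ≤
      min 1 ((q : ℝ) * C ^ (-(1 / (q : ℝ))) * δ⁻¹ * ε ^ (1 - m / (q : ℝ)) *
        (∏ i ∈ Finset.Icc (q + 1) n, a i) ^ ((1 : ℝ) / q)) := by
  have hq0 : (0:ℝ) < (q:ℝ) := by exact_mod_cast hq1
  have hqne : (q:ℝ) ≠ 0 := ne_of_gt hq0
  have hapos : ∀ j, 1 ≤ j → j ≤ n → 0 < a j :=
    fun j h1 h2 => ha1.trans_le (hmono 1 j le_rfl h1 h2)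
  have haq : 0 < a q := hapos q hq1 hqn
  set S := ∑ j ∈ Finset.Icc 1 q, ahat j with hSdef
  set T := ∑ j ∈ Finset.Icc 1 q, a j with hTdef
  have hsum : δ / p * T + (q:ℝ) * (ε / p) ≤ S := by
    have h : ∑ j ∈ Finset.Icc 1 q, (δ / p * a j + ε / p) ≤ S :=
      Finset.sum_le_sum (fun j hj => by
        rw [Finset.mem_Icc] at hj
        exact hhat j hj.1 (hj.2.trans hqn))
    calc δ / p * T + (q:ℝ) * (ε / p)
        = ∑ j ∈ Finset.Icc 1 q, (δ / p * a j + ε / p) := by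
          rw [Finset.sum_add_distrib, ← Finset.mul_sum, Finset.sum_const,
            Nat.card_Icc, nsmul_eq_mul]
          simp
          exact Or.inl hTdef
      _ ≤ S := h
  have hTq : a q ≤ T := by
    refine Finset.single_le_sum (fun i hi => ?_) ?_
    · rw [Finset.mem_Icc] at hi
      exact (hapos i hi.1 (hi.2.trans hqn)).le
    · rw [Finset.mem_Icc]; exact ⟨hq1, le_rfl⟩
  have hT0 : 0 < T := haq.trans_le hTq
  have h1 : δ * T + (q:ℝ) * ε ≤ p * S := by
    have h := mul_le_mul_of_nonneg_left hsum hp.le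
    calc δ * T + (q:ℝ) * ε = p * (δ / p * T + (q:ℝ) * (ε / p)) := by
          field_simp
      _ ≤ p * S := h
  have hpS0 : 0 < p * S :=
    lt_of_lt_of_le (add_pos (mul_pos hδ hT0) (mul_pos hq0 hε)) h1
  refine ⟨hpS0, ?_, ?_⟩
  · refine le_min ?_ ?_
    · rw [div_le_one hpS0]
      nlinarith [mul_pos hδ hT0]
    · have hle : δ * a q ≤ p * S := by nlinarith [mul_le_mul_of_nonneg_left hTq hδ.le]
      gcongr
      all_goals first
        | positivity
        | exact mul_pos hδ haq
        | exact hle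
  · refine min_le_min le_rfl ?_
    set P := ∏ i ∈ Finset.Icc (q + 1) n, a i with hPdef
    have hP : 0 < P := by
      refine Finset.prod_pos (fun i hi => ?_)
      rw [Finset.mem_Icc] at hi
      exact hapos i (le_trans (Nat.le_add_left 1 q) hi.1) hi.2
    have hsplit : (∏ i ∈ Finset.Icc 1 n, a i) = (∏ i ∈ Finset.Icc 1 q, a i) * P := by
      rw [hPdef, show Finset.Icc 1 n = Finset.Ioc 0 n from rfl,
        show Finset.Icc 1 q = Finset.Ioc 0 q from rfl,
        Finset.Icc_add_one_left_eq_Ioc]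
      exact (Finset.prod_Ioc_consecutive a (Nat.zero_le q) hqn).symm
    have hQ : ∏ i ∈ Finset.Icc 1 q, a i ≤ a q ^ q := by
      calc ∏ i ∈ Finset.Icc 1 q, a i ≤ ∏ _i ∈ Finset.Icc 1 q, a q := by
            refine Finset.prod_le_prod (fun i hi => ?_) (fun i hi => ?_) <;>
              rw [Finset.mem_Icc] at hi
            · exact (hapos i hi.1 (hi.2.trans hqn)).le
            · exact hmono i q hi.1 hi.2 hqn
        _ = a q ^ q := by rw [Finset.prod_const, Nat.card_Icc]; simp
    have hkey : C * ε ^ m / P ≤ a q ^ q := by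
      rw [div_le_iff₀ hP]
      calc C * ε ^ m ≤ ∏ i ∈ Finset.Icc 1 n, a i := hprod
        _ = (∏ i ∈ Finset.Icc 1 q, a i) * P := hsplit
        _ ≤ a q ^ q * P := by nlinarith
    have hAle : (C * ε ^ m / P) ^ ((1:ℝ)/(q:ℝ)) ≤ a q := by
      have h := Real.rpow_le_rpow (by positivity) hkey (by positivity : (0:ℝ) ≤ 1/(q:ℝ))
      rwa [← Real.rpow_natCast (a q) q, ← Real.rpow_mul haq.le,
        mul_one_div_cancel hqne, Real.rpow_one] at h
    have hA0 : (0:ℝ) < (C * ε ^ m / P) ^ ((1:ℝ)/(q:ℝ)) := by positivity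
    have step : (q : ℝ) * ε / (δ * a q)
        ≤ (q : ℝ) * ε / (δ * (C * ε ^ m / P) ^ ((1:ℝ)/(q:ℝ))) := by
      gcongr
      all_goals first
        | positivity
        | exact mul_pos hδ hA0
        | exact hAle
    refine step.trans (le_of_eq ?_)
    rw [Real.div_rpow (by positivity) hP.le, Real.mul_rpow hC.le (by positivity),
      ← Real.rpow_mul hε.le, mul_one_div, Real.rpow_neg hC.le,
      Real.rpow_sub hε, Real.rpow_one]
    have hC1 : (0:ℝ) < C ^ ((1:ℝ)/(q:ℝ)) := by positivity
    have hεm : (0:ℝ) < ε ^ (m/(q:ℝ)) := by positivity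
    have hP1 : (0:ℝ) < P ^ ((1:ℝ)/(q:ℝ)) := by positivity
    field_simp
end

section
/- Let E and F be complex Hilbert spaces and let T be a densely defined closed linear operator from E to F, with Hilbert-space adjoint T*. Let β ∈ F and let A, B > 0 be real numbers such that |⟨β, α⟩_F|² ≤ A(‖T*α‖_E² + B‖α‖_F²) for every α in the domain of T*. Then there exist u in the domain of T and v ∈ F such that β = Tu + v and ‖u‖_E² + B^{-1}‖v‖_F² ≤ A. -/
open MeasureTheory

/-- Hörmander-type existence lemma. If `T` is a densely defined closed
operator between complex Hilbert spaces and `β` satisfies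
`|⟨β, α⟩|² ≤ A(‖T*α‖² + B‖α‖²)` for all `α ∈ dom T*`, then there are `u ∈ dom T` and `v`
with `β = Tu + v` and `‖u‖² + B⁻¹‖v‖² ≤ A`. -/
theorem stmt4 {E F : Type*}
    [NormedAddCommGroup E] [InnerProductSpace ℂ E] [CompleteSpace E]
    [NormedAddCommGroup F] [InnerProductSpace ℂ F] [CompleteSpace F]
    (T : E →ₗ.[ℂ] F) (hdense : Dense (T.domain : Set E)) (hclosed : T.IsClosed)
    (β : F) (A B : ℝ) (hA : 0 < A) (hB : 0 < B)
    (hineq : ∀ α : T.adjoint.domain,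
      ‖(inner ℂ β (α : F) : ℂ)‖ ^ 2 ≤ A * (‖T.adjoint α‖ ^ 2 + B * ‖(α : F)‖ ^ 2)) :
    ∃ (u : T.domain) (v : F), β = T u + v ∧ ‖(u : E)‖ ^ 2 + B⁻¹ * ‖v‖ ^ 2 ≤ A := by
  classical
  have hsB : (0:ℝ) < Real.sqrt B := Real.sqrt_pos.2 hB
  set c : ℂ := (Real.sqrt B : ℂ) with hc
  have hc0 : c ≠ 0 := by
    simp only [hc, ne_eq, Complex.ofReal_eq_zero]
    exact ne_of_gt hsB
  have hcnorm : ‖c‖ = Real.sqrt B := by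
    rw [hc, Complex.norm_real, Real.norm_eq_abs, abs_of_nonneg hsB.le]
  -- The auxiliary operator `S : dom T* → E ×₂ F`, `α ↦ (T*α, √B • α)`.
  let S : T.adjoint.domain →ₗ[ℂ] WithLp 2 (E × F) :=
    (WithLp.linearEquiv 2 ℂ (E × F)).symm.toLinearMap ∘ₗ
      (T.adjoint.toFun.prod (c • (T.adjoint.domain.subtype)))
  have hSfst : ∀ α, (S α).fst = T.adjoint α := fun _ => rfl
  have hSsnd : ∀ α, (S α).snd = c • (α : F) := fun _ => rfl
  have hSnorm : ∀ α, ‖S α‖ ^ 2 = ‖T.adjoint α‖ ^ 2 + B * ‖(α : F)‖ ^ 2 := by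
    intro α
    rw [WithLp.prod_norm_sq_eq_of_L2, hSfst, hSsnd, norm_smul, hcnorm, mul_pow,
      Real.sq_sqrt hB.le]
  have hSinj : Function.Injective S := by
    intro a b hab
    have h2 : c • (a : F) = c • (b : F) := by
      rw [← hSsnd a, ← hSsnd b, hab]
    exact Subtype.ext (smul_right_injective F hc0 h2)
  -- the functional on the range of `S`
  let L : T.adjoint.domain →ₗ[ℂ] ℂ :=
    (innerSL ℂ β).toLinearMap ∘ₗ T.adjoint.domain.subtype
  let eS := LinearEquiv.ofInjective S hSinj
  let ψ₀ : LinearMap.range S →ₗ[ℂ] ℂ := L ∘ₗ eS.symm.toLinearMap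
  have hψ₀ : ∀ α : T.adjoint.domain,
      ψ₀ ⟨S α, LinearMap.mem_range_self S α⟩ = inner ℂ β (α : F) := by
    intro α
    have h1 : (⟨S α, LinearMap.mem_range_self S α⟩ : LinearMap.range S) = eS α := by
      apply Subtype.ext
      simp [eS]
    simp only [ψ₀, LinearMap.coe_comp, LinearEquiv.coe_coe, Function.comp_apply, h1,
      LinearEquiv.symm_apply_apply]
    rfl
  have hbound : ∀ y : LinearMap.range S, ‖ψ₀ y‖ ≤ Real.sqrt A * ‖y‖ := by
    intro y
    obtain ⟨α, hα⟩ := y.2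
    have hy : y = ⟨S α, LinearMap.mem_range_self S α⟩ := Subtype.ext hα.symm
    have hnormy : ‖y‖ = ‖S α‖ := by rw [hy]; rfl
    rw [hy, hψ₀]
    show _ ≤ Real.sqrt A * ‖S α‖
    have h1 : ‖(inner ℂ β (α : F) : ℂ)‖ ^ 2 ≤ A * ‖S α‖ ^ 2 := by
      rw [hSnorm]; exact hineq α
    calc ‖(inner ℂ β (α : F) : ℂ)‖
        = Real.sqrt (‖(inner ℂ β (α : F) : ℂ)‖ ^ 2) := (Real.sqrt_sq (norm_nonneg _)).symm
      _ ≤ Real.sqrt (A * ‖S α‖ ^ 2) := Real.sqrt_le_sqrt h1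
      _ = Real.sqrt A * ‖S α‖ := by
          rw [Real.sqrt_mul hA.le, Real.sqrt_sq (norm_nonneg _)]
  let ψ : LinearMap.range S →L[ℂ] ℂ := ψ₀.mkContinuous (Real.sqrt A) hbound
  obtain ⟨g, hg, hgnorm⟩ := exists_extension_norm_eq (LinearMap.range S) ψ
  have hgle : ‖g‖ ≤ Real.sqrt A := by
    rw [hgnorm]
    exact ψ₀.mkContinuous_norm_le (Real.sqrt_nonneg A) hbound
  set ξ : WithLp 2 (E × F) := (InnerProductSpace.toDual ℂ (WithLp 2 (E × F))).symm g with hξdef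
  have hξ : ∀ y, (inner ℂ ξ y : ℂ) = g y := fun y => InnerProductSpace.toDual_symm_apply
  have hξnorm : ‖ξ‖ ≤ Real.sqrt A := by
    rw [hξdef, LinearIsometryEquiv.norm_map]; exact hgle
  set v : F := c • ξ.snd with hv
  -- the key identity
  have hkey : ∀ α : T.adjoint.domain,
      (inner ℂ ξ.fst (T.adjoint α) : ℂ) = inner ℂ (β - v) (α : F) := by
    intro α
    have h1 : (inner ℂ ξ (S α) : ℂ) = inner ℂ β (α : F) := by
      rw [hξ]
      have := hg ⟨S α, LinearMap.mem_range_self S α⟩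
      rw [this]
      show ψ₀ _ = _
      rw [hψ₀]
    have h3 : (inner ℂ ξ.fst (T.adjoint α) : ℂ) + c * inner ℂ ξ.snd (α : F) = inner ℂ β (α : F) := by
      rw [← h1, WithLp.prod_inner_apply]
      show _ = inner ℂ ξ.fst (S α).fst + inner ℂ ξ.snd (S α).snd
      rw [hSfst, hSsnd, inner_smul_right]
    rw [inner_sub_left, hv, inner_smul_left, hc, Complex.conj_ofReal]
    linear_combination h3
  -- the closed graph, transported to the `L²` product
  let e2 := WithLp.linearEquiv 2 ℂ (E × F)
  let K : Submodule ℂ (WithLp 2 (E × F)) := T.graph.map e2.symm.toLinearMap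
  have hKclosed : IsClosed (K : Set (WithLp 2 (E × F))) := by
    have himg : (K : Set (WithLp 2 (E × F))) =
        (WithLp.prodContinuousLinearEquiv 2 ℂ E F).symm '' (T.graph : Set (E × F)) := by
      rw [Submodule.map_coe]; rfl
    rw [himg]
    exact ((WithLp.prodContinuousLinearEquiv 2 ℂ E F).symm.toHomeomorph.isClosedMap) _ hclosed
  -- membership of `(ξ.fst, β - v)` in the graph, via double orthogonal complement
  have hmem : e2.symm (ξ.fst, β - v) ∈ K := by
    rw [← hKclosed.submodule_topologicalClosure_eq, ← Submodule.orthogonal_orthogonal_eq_closure,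
      Submodule.mem_orthogonal]
    intro q hq
    have hq' : ∀ x : T.domain, (inner ℂ (x : E) q.fst : ℂ) + inner ℂ (T x) q.snd = 0 := by
      intro x
      have hk : e2.symm ((x : E), T x) ∈ K := Submodule.mem_map_of_mem (T.mem_graph x)
      have h0 := (Submodule.mem_orthogonal K q).1 hq _ hk
      rw [WithLp.prod_inner_apply] at h0
      exact h0
    have hq'' : ∀ x : T.domain, (inner ℂ q.fst (x : E) : ℂ) + inner ℂ q.snd (T x) = 0 := by
      intro x
      have h := congrArg (starRingEnd ℂ) (hq' x)
      simpa [inner_conj_symm] using h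
    have hmem2 : q.snd ∈ T.adjoint.domain := by
      apply LinearPMap.mem_adjoint_domain_of_exists
      refine ⟨-q.fst, fun x => ?_⟩
      rw [inner_neg_left]
      linear_combination -(hq'' x)
    have hTq : T.adjoint ⟨q.snd, hmem2⟩ = -q.fst := by
      apply LinearPMap.adjoint_apply_eq hdense
      intro x
      rw [inner_neg_left]
      linear_combination -(hq'' x)
    rw [WithLp.prod_inner_apply]
    have h5 := hkey ⟨q.snd, hmem2⟩
    rw [hTq, inner_neg_right] at h5
    have h6 := congrArg (starRingEnd ℂ) h5
    simp only [map_neg, inner_conj_symm] at h6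
    show (inner ℂ q.fst ξ.fst : ℂ) + inner ℂ q.snd (β - v) = 0
    linear_combination -h6
  -- extract `u`
  obtain ⟨y, hy, hy2⟩ := Submodule.mem_map.1 hmem
  have hy3 : y = (ξ.fst, β - v) := e2.symm.injective hy2
  rw [hy3] at hy
  obtain ⟨u, hu1, hu2⟩ := T.mem_graph_iff.1 hy
  refine ⟨u, v, ?_, ?_⟩
  · rw [hu2, sub_add_cancel]
  · have hnv : ‖v‖ ^ 2 = B * ‖ξ.snd‖ ^ 2 := by
      rw [hv, norm_smul, hcnorm, mul_pow, Real.sq_sqrt hB.le]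
    have hsum : ‖(u : E)‖ ^ 2 + B⁻¹ * ‖v‖ ^ 2 = ‖ξ‖ ^ 2 := by
      rw [hu1, hnv, WithLp.prod_norm_sq_eq_of_L2]
      field_simp
    rw [hsum]
    calc ‖ξ‖ ^ 2 ≤ Real.sqrt A ^ 2 := by
          exact pow_le_pow_left₀ (norm_nonneg _) hξnorm 2
      _ = A := Real.sq_sqrt hA.le
end
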